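/- (Approximation of the residual.) Assume the N×d real matrix Φ satisfies the Restricted Isometry Condition with parameters (2n, ε), where 0 < ε ≤ 0.03. Let v ∈ ℝ^d be n-sparse and let I ⊆ {1,…,d} satisfy |supp(v) ∪ I| ≤ 2n. Set x = Φv, F = range(Φ_I), r = P_{F^⊥} x, v₀ = v|_{supp(v)∖I}, and x₀ = Φv₀. Then ‖x₀ − r‖₂ ≤ 2.2 ε ‖x₀‖₂. -/

import Mathlib

open Finset RealInnerProductSpace

noncomputable section

/-- A vector `v ∈ ℝ^d` is `m`-sparse if its support has at most `m` elements. -/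
def msparse {d : ℕ} (m : ℕ) (v : EuclideanSpace ℝ (Fin d)) : Prop :=
  (Finset.univ.filter fun i => v i ≠ 0).card ≤ m

/-- The Restricted Isometry Condition with parameters `(m, ε)`. -/
def RIC {N d : ℕ} (Φ : Matrix (Fin N) (Fin d) ℝ) (m : ℕ) (ε : ℝ) : Prop :=
  ∀ v : EuclideanSpace ℝ (Fin d), msparse m v →
    (1 - ε) * ‖v‖ ≤ ‖Matrix.toEuclideanLin Φ v‖ ∧
    ‖Matrix.toEuclideanLin Φ v‖ ≤ (1 + ε) * ‖v‖

/-- The support of a vector, as a `Finset`. -/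
def suppF {d : ℕ} (v : EuclideanSpace ℝ (Fin d)) : Finset (Fin d) :=
  Finset.univ.filter fun i => v i ≠ 0

/-- `restr S w = w|_S`: the vector equal to `w` on `S` and zero elsewhere. -/
def restr {d : ℕ} (S : Finset (Fin d)) (w : EuclideanSpace ℝ (Fin d)) :
    EuclideanSpace ℝ (Fin d) :=
  WithLp.toLp 2 (fun i => if i ∈ S then w i else 0)

/-- `colSpan Φ S = range(Φ_S)`: the span of the columns of `Φ` indexed by `S`. -/
def colSpan {N d : ℕ} (Φ : Matrix (Fin N) (Fin d) ℝ) (S : Finset (Fin d)) :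
    Submodule ℝ (EuclideanSpace ℝ (Fin N)) :=
  Submodule.span ℝ ((fun j => (WithLp.toLp 2 (fun i => Φ i j) : EuclideanSpace ℝ (Fin N))) '' (S : Set (Fin d)))

/-! ### Auxiliary lemmas -/

lemma toEuc_apply {N d : ℕ} (Φ : Matrix (Fin N) (Fin d) ℝ)
    (w : EuclideanSpace ℝ (Fin d)) (i : Fin N) :
    Matrix.toEuclideanLin Φ w i = ∑ j, Φ i j * w j := rfl

lemma msparse_of_subset {d m : ℕ} {w : EuclideanSpace ℝ (Fin d)} {S : Finset (Fin d)}
    (h : ∀ i, w i ≠ 0 → i ∈ S) (hc : S.card ≤ m) : msparse m w :=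
  le_trans (Finset.card_le_card fun i hi => h i (Finset.mem_filter.mp hi).2) hc

/-- Membership in the column span for vectors supported in `I`. -/
lemma mem_colSpan_of_supp {N d : ℕ} (Φ : Matrix (Fin N) (Fin d) ℝ) (I : Finset (Fin d))
    (w : EuclideanSpace ℝ (Fin d)) (hw : ∀ i, i ∉ I → w i = 0) :
    Matrix.toEuclideanLin Φ w ∈ colSpan Φ I := by
  have hrep : Matrix.toEuclideanLin Φ w
      = ∑ j ∈ I, w j • (WithLp.toLp 2 (fun i => Φ i j) : EuclideanSpace ℝ (Fin N)) := by
    ext i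
    have : (∑ j ∈ I, w j • (WithLp.toLp 2 (fun i => Φ i j) : EuclideanSpace ℝ (Fin N))) i
        = ∑ j ∈ I, w j * Φ i j := by
      simp [WithLp.ofLp_sum, Finset.sum_apply]
    rw [toEuc_apply, this]
    rw [← Finset.sum_subset (Finset.subset_univ I) (fun j _ hj => by rw [hw j hj, mul_zero])]
    exact Finset.sum_congr rfl fun j _ => mul_comm _ _
  rw [hrep]
  exact Submodule.sum_mem _ fun j hj =>
    Submodule.smul_mem _ _ (Submodule.subset_span ⟨j, hj, rfl⟩)

/-- Every element of the column span is the image of a vector supported in `I`. -/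
lemma exists_of_mem_colSpan {N d : ℕ} (Φ : Matrix (Fin N) (Fin d) ℝ) (I : Finset (Fin d))
    (p : EuclideanSpace ℝ (Fin N)) (hp : p ∈ colSpan Φ I) :
    ∃ w : EuclideanSpace ℝ (Fin d), (∀ i, i ∉ I → w i = 0) ∧
      Matrix.toEuclideanLin Φ w = p := by
  let S : Submodule ℝ (EuclideanSpace ℝ (Fin d)) :=
    { carrier := {w | ∀ i, i ∉ I → w i = 0}
      add_mem' := fun ha hb i hi => by
        simp only [Set.mem_setOf_eq, WithLp.ofLp_add, Pi.add_apply] at ha hb ⊢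
        rw [ha i hi, hb i hi, add_zero]
      zero_mem' := fun i _ => rfl
      smul_mem' := fun c w hw i hi => by
        simp only [Set.mem_setOf_eq, WithLp.ofLp_smul, Pi.smul_apply, smul_eq_mul] at hw ⊢
        rw [hw i hi, mul_zero] }
  have hle : colSpan Φ I ≤ S.map (Matrix.toEuclideanLin Φ) := by
    apply Submodule.span_le.mpr
    rintro _ ⟨j, hj, rfl⟩
    refine ⟨(EuclideanSpace.single j (1:ℝ)), fun i hi => ?_, ?_⟩
    · rw [EuclideanSpace.single_apply]
      exact if_neg fun h => hi (by rw [h]; exact hj)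
    · ext i
      rw [toEuc_apply]
      rw [Finset.sum_eq_single j (fun k _ hk => by
        simp [EuclideanSpace.single_apply, hk]) (fun h => absurd (Finset.mem_univ j) h)]
      simp [EuclideanSpace.single_apply]
  obtain ⟨w, hw, hweq⟩ := hle hp
  exact ⟨w, hw, hweq⟩

/-- Approximate orthogonality, raw form. -/
lemma approx_orth {N d n : ℕ} {Φ : Matrix (Fin N) (Fin d) ℝ} {ε : ℝ}
    (hε : 0 < ε) (hε1 : ε ≤ 0.03) (hΦ : RIC Φ (2 * n) ε)
    {A B : Finset (Fin d)} (hAB : ∀ i, i ∈ A → i ∉ B) (hcard : (A ∪ B).card ≤ 2 * n)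
    (a b : EuclideanSpace ℝ (Fin d))
    (ha : ∀ i, a i ≠ 0 → i ∈ A) (hb : ∀ i, b i ≠ 0 → i ∈ B) :
    |⟪Matrix.toEuclideanLin Φ a, Matrix.toEuclideanLin Φ b⟫| ≤ ε * (‖a‖ ^ 2 + ‖b‖ ^ 2) := by
  have hzero : ∀ i, a i = 0 ∨ b i = 0 := by
    intro i
    by_contra h
    push_neg at h
    exact hAB i (ha i h.1) (hb i h.2)
  have hip : ⟪a, b⟫ = 0 := by
    rw [PiLp.inner_apply]
    exact Finset.sum_eq_zero fun i _ => by
      rcases hzero i with h | h <;> simp [h]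
  have hsupp : ∀ (c : ℝ) i, a i + c * b i ≠ 0 → i ∈ A ∪ B := by
    intro c i h
    rcases hzero i with h0 | h0
    · refine Finset.mem_union_right _ (hb i fun hb0 => h ?_)
      rw [h0, hb0, mul_zero, add_zero]
    · exact Finset.mem_union_left _ (ha i fun ha0 => h (by rw [h0, ha0, mul_zero, add_zero]))
  have hadd : msparse (2 * n) (a + b) :=
    msparse_of_subset (fun i hi => hsupp 1 i (by simpa [one_mul] using hi)) hcard
  have hsub : msparse (2 * n) (a - b) :=
    msparse_of_subset (fun i hi => hsupp (-1) i (by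
      have : a i - b i ≠ 0 := hi
      intro hc; apply this; linarith [hc])) hcard
  have hS : ‖a + b‖ ^ 2 = ‖a‖ ^ 2 + ‖b‖ ^ 2 := by
    rw [norm_add_sq_real, hip]; ring
  have hS' : ‖a - b‖ ^ 2 = ‖a‖ ^ 2 + ‖b‖ ^ 2 := by
    rw [norm_sub_sq_real, hip]; ring
  obtain ⟨h1, h2⟩ := hΦ (a + b) hadd
  obtain ⟨h3, h4⟩ := hΦ (a - b) hsub
  rw [map_add] at h1 h2
  rw [map_sub] at h3 h4
  set Pa := Matrix.toEuclideanLin Φ a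
  set Pb := Matrix.toEuclideanLin Φ b
  have hpol : ‖Pa + Pb‖ ^ 2 - ‖Pa - Pb‖ ^ 2 = 4 * ⟪Pa, Pb⟫ := by
    rw [norm_add_sq_real, norm_sub_sq_real]; ring
  have hab : (0:ℝ) ≤ ‖a + b‖ := norm_nonneg _
  have hab' : (0:ℝ) ≤ ‖a - b‖ := norm_nonneg _
  have hPab : (0:ℝ) ≤ ‖Pa + Pb‖ := norm_nonneg _
  have hPab' : (0:ℝ) ≤ ‖Pa - Pb‖ := norm_nonneg _
  have he : (0:ℝ) ≤ 1 - ε := by linarith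
  have hu2 : ‖Pa + Pb‖ ^ 2 ≤ (1 + ε) ^ 2 * ‖a + b‖ ^ 2 := by nlinarith
  have hl2 : (1 - ε) ^ 2 * ‖a + b‖ ^ 2 ≤ ‖Pa + Pb‖ ^ 2 := by
    nlinarith [mul_self_le_mul_self (mul_nonneg he hab) h1]
  have hu2' : ‖Pa - Pb‖ ^ 2 ≤ (1 + ε) ^ 2 * ‖a - b‖ ^ 2 := by nlinarith
  have hl2' : (1 - ε) ^ 2 * ‖a - b‖ ^ 2 ≤ ‖Pa - Pb‖ ^ 2 := by
    nlinarith [mul_self_le_mul_self (mul_nonneg he hab') h3]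
  rw [hS] at hu2 hl2
  rw [hS'] at hu2' hl2'
  set s := ‖a‖ ^ 2 + ‖b‖ ^ 2 with hs
  have e1 : (1 + ε) ^ 2 * s - (1 - ε) ^ 2 * s = 4 * (ε * s) := by ring
  rw [abs_le]
  constructor <;> linarith

/-- Approximate orthogonality with product of norms. -/
lemma approx_orth2 {N d n : ℕ} {Φ : Matrix (Fin N) (Fin d) ℝ} {ε : ℝ}
    (hε : 0 < ε) (hε1 : ε ≤ 0.03) (hΦ : RIC Φ (2 * n) ε)
    {A B : Finset (Fin d)} (hAB : ∀ i, i ∈ A → i ∉ B) (hcard : (A ∪ B).card ≤ 2 * n)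
    (a b : EuclideanSpace ℝ (Fin d))
    (ha : ∀ i, a i ≠ 0 → i ∈ A) (hb : ∀ i, b i ≠ 0 → i ∈ B) :
    |⟪Matrix.toEuclideanLin Φ a, Matrix.toEuclideanLin Φ b⟫| ≤ 2 * ε * ‖a‖ * ‖b‖ := by
  by_cases ha0 : a = 0
  · simp [ha0]
  by_cases hb0 : b = 0
  · simp [hb0]
  have hna : (0:ℝ) < ‖a‖ := norm_pos_iff.mpr ha0
  have hnb : (0:ℝ) < ‖b‖ := norm_pos_iff.mpr hb0
  set t : ℝ := Real.sqrt (‖b‖ / ‖a‖) with ht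
  have ht0 : 0 < t := Real.sqrt_pos.mpr (div_pos hnb hna)
  have ht2 : t ^ 2 = ‖b‖ / ‖a‖ := Real.sq_sqrt (le_of_lt (div_pos hnb hna))
  have key := approx_orth hε hε1 hΦ hAB hcard (t • a) (t⁻¹ • b)
    (fun i hi => ha i (by
      intro h; apply hi; show t * a i = 0; rw [h, mul_zero]))
    (fun i hi => hb i (by
      intro h; apply hi; show t⁻¹ * b i = 0; rw [h, mul_zero]))
  have hn1 : ‖t • a‖ ^ 2 = ‖b‖ * ‖a‖ := by
    rw [norm_smul, mul_pow, Real.norm_eq_abs, sq_abs, ht2]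
    field_simp [ne_of_gt hna]
  have hn2 : ‖t⁻¹ • b‖ ^ 2 = ‖a‖ * ‖b‖ := by
    rw [norm_smul, mul_pow, Real.norm_eq_abs, sq_abs, inv_pow, ht2, inv_div]
    field_simp [ne_of_gt hnb]
  have hinner : ⟪Matrix.toEuclideanLin Φ (t • a), Matrix.toEuclideanLin Φ (t⁻¹ • b)⟫
      = ⟪Matrix.toEuclideanLin Φ a, Matrix.toEuclideanLin Φ b⟫ := by
    rw [map_smul, map_smul, real_inner_smul_left, real_inner_smul_right]
    rw [← mul_assoc, mul_inv_cancel₀ (ne_of_gt ht0), one_mul]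
  rw [hinner, hn1, hn2] at key
  calc |⟪Matrix.toEuclideanLin Φ a, Matrix.toEuclideanLin Φ b⟫|
      ≤ ε * (‖b‖ * ‖a‖ + ‖a‖ * ‖b‖) := key
    _ = 2 * ε * ‖a‖ * ‖b‖ := by ring

/-- Pure arithmetic endgame. -/
lemma final_arith {ε U X a b : ℝ} (hε : 0 < ε) (hε' : ε ≤ 0.03)
    (ha : 0 ≤ a) (hb : 0 ≤ b) (hX : 0 ≤ X) (hU : 0 < U)
    (h1 : U ^ 2 ≤ 2 * ε * a * b) (h2 : (1 - ε) * a ≤ X) (h3 : (1 - ε) * b ≤ U) :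
    U ≤ 2.2 * ε * X := by
  have he : (0:ℝ) < 1 - ε := by linarith
  have hprod : (1 - ε) * a * ((1 - ε) * b) ≤ X * U :=
    mul_le_mul h2 h3 (mul_nonneg he.le hb) hX
  have hA := mul_le_mul_of_nonneg_left h1 (sq_nonneg (1 - ε))
  have hB := mul_le_mul_of_nonneg_left hprod (by linarith : (0:ℝ) ≤ 2 * ε)
  have hUU : (1 - ε) ^ 2 * U * U ≤ 2 * ε * X * U := by nlinarith
  have hdiv : (1 - ε) ^ 2 * U ≤ 2 * ε * X := le_of_mul_le_mul_right hUU hU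
  have h22 : (0:ℝ) ≤ 2.2 * (1 - ε) ^ 2 - 2 := by nlinarith
  nlinarith [hdiv, mul_pos he he, mul_nonneg (mul_nonneg hε.le hX) h22]

/-- Approximation of the residual: under RIC with parameters `(2n, ε)`, `0 < ε ≤ 0.03`,
for an `n`-sparse `v` and a set `I` with `|supp(v) ∪ I| ≤ 2n`, setting `x = Φv`,
`F = range(Φ_I)`, `r = P_{F^⊥} x`, `v₀ = v|_{supp(v)∖I}`, `x₀ = Φv₀`, one has
`‖x₀ − r‖₂ ≤ 2.2 ε ‖x₀‖₂`. -/
theorem approximation_of_residual {N d n : ℕ} (Φ : Matrix (Fin N) (Fin d) ℝ)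
    (ε : ℝ) (hε : 0 < ε) (hε' : ε ≤ 0.03) (hΦ : RIC Φ (2 * n) ε)
    (v : EuclideanSpace ℝ (Fin d)) (hv : msparse n v)
    (I : Finset (Fin d)) (hI : (suppF v ∪ I).card ≤ 2 * n)
    (x r x₀ : EuclideanSpace ℝ (Fin N)) (v₀ : EuclideanSpace ℝ (Fin d))
    (hx : x = Matrix.toEuclideanLin Φ v)
    (hr : r = (Submodule.orthogonalProjection (colSpan Φ I)ᗮ x : EuclideanSpace ℝ (Fin N)))
    (hv₀ : v₀ = restr (suppF v \ I) v)
    (hx₀ : x₀ = Matrix.toEuclideanLin Φ v₀) :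
    ‖x₀ - r‖ ≤ 2.2 * ε * ‖x₀‖ := by
  set F := colSpan Φ I with hF
  -- supports
  have hv₀supp : ∀ i, v₀ i ≠ 0 → i ∈ suppF v \ I := by
    intro i hi
    rw [hv₀] at hi
    by_contra h
    exact hi (if_neg h : (if i ∈ suppF v \ I then v i else 0) = 0)
  have hv₀val : ∀ i, i ∈ suppF v \ I → v₀ i = v i := by
    intro i hi; rw [hv₀]; exact (if_pos hi : (if i ∈ suppF v \ I then v i else 0) = v i)
  -- x - x₀ ∈ F
  have hdiff : x - x₀ ∈ F := by
    rw [hx, hx₀, ← map_sub]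
    apply mem_colSpan_of_supp
    intro i hi
    show v i - v₀ i = 0
    by_cases hs : i ∈ suppF v \ I
    · rw [hv₀val i hs, sub_self]
    · have hv0 : v₀ i = 0 := by
        rw [hv₀]; exact (if_neg hs : (if i ∈ suppF v \ I then v i else 0) = 0)
      have : v i = 0 := by
        by_contra hvi
        exact hs (Finset.mem_sdiff.mpr ⟨Finset.mem_filter.mpr ⟨Finset.mem_univ i, hvi⟩, hi⟩)
      rw [this, hv0, sub_self]
  -- r ∈ Fᗮ and x₀ - r ∈ F
  have hrmem : r ∈ Fᗮ := by
    rw [hr]; exact (Submodule.orthogonalProjection Fᗮ x).2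
  have hxr : x - r ∈ F := by
    have h1 : x - r ∈ Fᗮᗮ := by
      rw [hr]; exact Submodule.sub_starProjection_mem_orthogonal x
    rwa [Submodule.orthogonal_orthogonal] at h1
  have humem : x₀ - r ∈ F := by
    have := F.sub_mem hxr hdiff
    have heq : x - r - (x - x₀) = x₀ - r := by abel
    rwa [heq] at this
  -- represent x₀ - r as Φ y with supp y ⊆ I
  obtain ⟨y, hy, hyeq⟩ := exists_of_mem_colSpan Φ I _ humem
  -- ‖x₀ - r‖² = ⟪x₀, x₀ - r⟫ = ⟪Φ v₀, Φ y⟫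
  have hortho : ⟪x₀ - r, r⟫ = 0 :=
    (Submodule.mem_orthogonal F r).mp hrmem _ humem
  have hinner : ‖x₀ - r‖ ^ 2 = ⟪Matrix.toEuclideanLin Φ v₀, Matrix.toEuclideanLin Φ y⟫ := by
    rw [hyeq, ← hx₀]
    have : ⟪x₀, x₀ - r⟫ = ⟪x₀ - r, x₀ - r⟫ + ⟪r, x₀ - r⟫ := by
      rw [← inner_add_left]; norm_num
    have hortho' : ⟪r, x₀ - r⟫ = 0 := by rw [real_inner_comm]; exact hortho
    rw [this, hortho', add_zero, real_inner_self_eq_norm_sq]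
  -- sparsity facts and RIC bounds
  have hv₀sp : msparse (2 * n) v₀ := by
    apply msparse_of_subset (S := suppF v)
      (fun i hi => (Finset.mem_sdiff.mp (hv₀supp i hi)).1)
    calc (suppF v).card ≤ n := hv
      _ ≤ 2 * n := by omega
  have hysp : msparse (2 * n) y := by
    apply msparse_of_subset (S := I) (fun i hi => by
      by_contra h; exact hi (hy i h))
    exact le_trans (Finset.card_le_card Finset.subset_union_right) hI
  have hb1 := (hΦ v₀ hv₀sp).1
  have hb2 := (hΦ y hysp).1
  rw [← hx₀] at hb1
  rw [hyeq] at hb2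
  -- approximate orthogonality
  have hAB : ∀ i, i ∈ suppF v \ I → i ∉ I := fun i hi => (Finset.mem_sdiff.mp hi).2
  have hcard : ((suppF v \ I) ∪ I).card ≤ 2 * n := by
    refine le_trans (Finset.card_le_card ?_) hI
    intro i hi
    rcases Finset.mem_union.mp hi with h | h
    · exact Finset.mem_union_left _ (Finset.mem_sdiff.mp h).1
    · exact Finset.mem_union_right _ h
  have hkey := approx_orth2 hε hε' hΦ hAB hcard v₀ y hv₀supp
    (fun i hi => by by_contra h; exact hi (hy i h))
  -- assemble
  set U := ‖x₀ - r‖ with hU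
  set X := ‖x₀‖ with hX
  have hU0 : 0 ≤ U := norm_nonneg _
  have hX0 : 0 ≤ X := norm_nonneg _
  have ha0 : 0 ≤ ‖v₀‖ := norm_nonneg _
  have hb0 : 0 ≤ ‖y‖ := norm_nonneg _
  have hmain : U ^ 2 ≤ 2 * ε * ‖v₀‖ * ‖y‖ := by
    rw [hU, hinner]; exact le_trans (le_abs_self _) hkey
  rcases eq_or_lt_of_le hU0 with h0 | h0
  · rw [← h0]; positivity
  · exact final_arith hε hε' ha0 hb0 hX0 h0 hmain hb1 hb2
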